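/- For p = n-1 and k ≤ n-2, the trace Tr(E⁰_k·π_{n-1}) = ((n-2)!)/(2^k(n-k-1)!)·(n - k² - k - 1); in particular it vanishes if and only if n = k² + k + 1. -/

import Mathlib

/-- The matrix of `-√2·X = z ∂/∂z̄` in the basis `w_p = z^{p-1} z̄^{n-p}` (`p = 1,…,n`,
here indexed by `Fin n` with `p = i+1`): `w_p ↦ (n-p)·w_{p+1}`. -/
def Emat (n : ℕ) : Matrix (Fin n) (Fin n) ℂ :=
  fun i j => if (i : ℕ) = (j : ℕ) + 1 then ((n - 1 - (j : ℕ) : ℕ) : ℂ) else 0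

/-- The matrix of `√2·Y = z̄ ∂/∂z` in the same basis: `w_p ↦ (p-1)·w_{p-1}`. -/
def Fmat (n : ℕ) : Matrix (Fin n) (Fin n) ℂ :=
  fun i j => if (i : ℕ) + 1 = (j : ℕ) then ((j : ℕ) : ℂ) else 0

/-- `E⁰_k = (-√2 X)^k`. -/
def E0 (n k : ℕ) : Matrix (Fin n) (Fin n) ℂ := (Emat n) ^ k

/-- `F⁰_k = -(√2 Y)^k`. -/
def F0 (n k : ℕ) : Matrix (Fin n) (Fin n) ℂ := -((Fmat n) ^ k)

/-- The coordinates (in the basis `w_{r+s+1} = z^{r+s} z̄^{n-1-(r+s)}`) of the real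
polynomial `u_p = x^{p-1} y^{n-p}` (with `z = x+iy`), `p = 1,…,n`, indexed by `Fin n`
with `p = (p:ℕ)+1`:
`u_p = i^{n-p}/2^{n-1} ∑_{r=0}^{p-1} ∑_{s=0}^{n-p} (-1)^s C(p-1,r) C(n-p,s) w_{r+s+1}`. -/
noncomputable def uvec (n : ℕ) (p : Fin n) : Fin n → ℂ := fun j =>
  Complex.I ^ (n - 1 - (p : ℕ)) / 2 ^ (n - 1) *
    ∑ r ∈ Finset.range ((p : ℕ) + 1), ∑ s ∈ Finset.range (n - (p : ℕ)),
      if r + s = (j : ℕ) then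
        ((-1 : ℂ)) ^ s * (((p : ℕ).choose r : ℕ) : ℂ) * (((n - 1 - (p : ℕ)).choose s : ℕ) : ℂ)
      else 0


open Finset Polynomial

section AuxLemmas

/-- Trinomial revision. -/
lemma trinom (a j b : ℕ) : a.choose j * (a - j).choose b = a.choose b * (a - b).choose j := by
  by_cases h : j + b ≤ a
  · have h1 := Nat.choose_mul (n := a) (k := j + b) (s := j) (Nat.le_add_right _ _)
    have h2 := Nat.choose_mul (n := a) (k := j + b) (s := b) (Nat.le_add_left _ _)
    simp only [Nat.add_sub_cancel, Nat.add_sub_cancel_left] at h1 h2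
    rw [Nat.choose_symm_add] at h1
    -- h1 : a.choose (j+b) * (j+b).choose b = a.choose j * (a-j).choose b
    -- h2 : a.choose (j+b) * (j+b).choose b = a.choose b * (a-b).choose j
    omega
  · push_neg at h
    by_cases hj : a < j
    · rw [Nat.choose_eq_zero_of_lt hj, Nat.choose_eq_zero_of_lt (by omega : a - b < j)]
      ring
    · push_neg at hj
      rw [Nat.choose_eq_zero_of_lt (by omega : a - j < b)]
      by_cases hb : a < b
      · rw [Nat.choose_eq_zero_of_lt hb]; ring
      · rw [Nat.choose_eq_zero_of_lt (by omega : a - b < j)]; ring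

lemma sum_choose' (N M : ℕ) (h : N < M) : ∑ m ∈ range M, N.choose m = 2 ^ N := by
  rw [← Nat.sum_range_choose N]
  exact (Finset.sum_subset (Finset.range_subset_range.2 (by omega))
    (fun x _ hx => Nat.choose_eq_zero_of_lt (by simp at hx ⊢; omega))).symm

lemma sum_mul_choose' (N M : ℕ) (hN : 1 ≤ N) (h : N < M) :
    ∑ m ∈ range M, m * N.choose m = N * 2 ^ (N - 1) := by
  obtain ⟨N', rfl⟩ : ∃ N', N = N' + 1 := ⟨N - 1, by omega⟩
  obtain ⟨M', rfl⟩ : ∃ M', M = M' + 1 := ⟨M - 1, by omega⟩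
  rw [Finset.sum_range_succ']
  simp only [Nat.zero_mul, Nat.add_zero]
  have : ∀ m, (m + 1) * (N' + 1).choose (m + 1) = (N' + 1) * N'.choose m := by
    intro m
    have h2 := Nat.add_one_mul_choose_eq N' m
    try simp only [Nat.succ_eq_add_one] at h2
    rw [mul_comm]; exact h2.symm
  rw [Finset.sum_congr rfl (fun m _ => this m), ← Finset.mul_sum,
    sum_choose' N' M' (by omega)]
  simp

lemma core_sum (n k : ℕ) (hn : 2 ≤ n) (hk1 : 1 ≤ k) (hk : k ≤ n - 2) :
    ∑ m ∈ range n, ((n - 1 - m).descFactorial k : ℂ) *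
        (((n - 2).choose m : ℂ) - if m = 0 then 0 else ((n - 2).choose (m - 1) : ℂ)) *
        (2 * (m : ℂ) + (2 * (k : ℂ) - (n : ℂ) + 1))
    = 2 ^ (n - 1 - k) * (k.factorial : ℂ) *
        ((k : ℂ) * ((n - 2).choose (k - 1) : ℂ) - ((n - 2).choose k : ℂ)) := by
  obtain ⟨K, rfl⟩ : ∃ K, k = K + 1 := ⟨k - 1, by omega⟩
  obtain ⟨N, rfl⟩ : ∃ N, n = N + 2 := ⟨n - 2, by omega⟩
  have hKN : K + 1 ≤ N := by omega
  simp only [show N + 2 - 1 = N + 1 from rfl, show N + 2 - 2 = N from rfl,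
    Nat.add_sub_cancel]
  -- abbreviate g
  set g : ℕ → ℂ := fun m => 2 * (m : ℂ) + (2 * ((K:ℂ)+1) - ((N:ℂ)+2) + 1) with hg
  have hgcast : ∀ m : ℕ, (2 * (m : ℂ) + (2 * ((K+1:ℕ) : ℂ) - ((N+2:ℕ) : ℂ) + 1)) = g m := by
    intro m; push_cast [hg]; ring
  -- step 1 : pull out (K+1)! and split into two sums
  have step1 : ∑ m ∈ range (N + 2), ((N + 1 - m).descFactorial (K+1) : ℂ) *
        ((N.choose m : ℂ) - if m = 0 then 0 else (N.choose (m - 1) : ℂ)) *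
        (2 * (m : ℂ) + (2 * ((K+1:ℕ) : ℂ) - ((N+2:ℕ) : ℂ) + 1))
      = ((K+1).factorial : ℂ) *
        ((∑ m ∈ range (N + 2), ((N + 1 - m).choose (K+1) : ℂ) * (N.choose m : ℂ) * g m) -
         (∑ m ∈ range (N + 2), ((N + 1 - m).choose (K+1) : ℂ) *
            (if m = 0 then 0 else (N.choose (m - 1) : ℂ)) * g m)) := by
    rw [← Finset.sum_sub_distrib, Finset.mul_sum]
    refine Finset.sum_congr rfl fun m _ => ?_
    rw [Nat.descFactorial_eq_factorial_mul_choose, hgcast]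
    push_cast
    ring
  rw [step1]
  -- second sum : shift index
  have step2 : (∑ m ∈ range (N + 2), ((N + 1 - m).choose (K+1) : ℂ) *
            (if m = 0 then 0 else (N.choose (m - 1) : ℂ)) * g m)
      = ∑ m ∈ range (N + 1), ((N - m).choose (K+1) : ℂ) * (N.choose m : ℂ) * g (m+1) := by
    rw [Finset.sum_range_succ']
    simp only [show ((0:ℕ) = 0) = True from by simp, if_true, ite_true, mul_zero, zero_mul, add_zero]
    refine Finset.sum_congr rfl fun m _ => ?_
    simp only [Nat.add_sub_cancel, if_neg (Nat.succ_ne_zero m)]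
    rw [show N + 1 - (m+1) = N - m from by omega]
  -- first sum : drop the last term
  have step3 : (∑ m ∈ range (N + 2), ((N + 1 - m).choose (K+1) : ℂ) * (N.choose m : ℂ) * g m)
      = ∑ m ∈ range (N + 1), ((N + 1 - m).choose (K+1) : ℂ) * (N.choose m : ℂ) * g m := by
    rw [Finset.sum_range_succ, Nat.choose_eq_zero_of_lt (by omega : N < N + 1)]
    simp
  rw [step2, step3, ← Finset.sum_sub_distrib]
  -- per-term Pascal
  have step4 : ∀ m ∈ range (N+1),
      ((N + 1 - m).choose (K+1) : ℂ) * (N.choose m : ℂ) * g m -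
        ((N - m).choose (K+1) : ℂ) * (N.choose m : ℂ) * g (m+1)
      = ((N.choose m : ℕ) * ((N - m).choose K : ℕ) : ℂ) * g m
        - 2 * ((N.choose m : ℕ) * ((N - m).choose (K+1) : ℕ) : ℂ) := by
    intro m hm
    simp only [Finset.mem_range] at hm
    have hps : (N + 1 - m) = (N - m) + 1 := by omega
    rw [hps, Nat.choose_succ_succ]
    have : g (m+1) = g m + 2 := by simp [hg]; push_cast; ring
    rw [this]
    push_cast
    ring
  rw [Finset.sum_congr rfl step4, Finset.sum_sub_distrib]
  have tri1' : ∀ m : ℕ, (N.choose m : ℂ) * ((N - m).choose K : ℂ)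
      = (N.choose K : ℂ) * ((N - K).choose m : ℂ) := by
    intro m; exact_mod_cast congrArg (Nat.cast : ℕ → ℂ) (trinom N m K)
  have tri2' : ∀ m : ℕ, (N.choose m : ℂ) * ((N - m).choose (K+1) : ℂ)
      = (N.choose (K+1) : ℂ) * ((N - (K+1)).choose m : ℂ) := by
    intro m; exact_mod_cast congrArg (Nat.cast : ℕ → ℂ) (trinom N m (K+1))
  simp only [tri1', tri2']
  have ev2 : ∑ x ∈ range (N+1), 2 * ((N.choose (K+1) : ℂ) * ((N - (K+1)).choose x : ℂ))
      = 2 * (N.choose (K+1) : ℂ) * 2 ^ (N - K - 1) := by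
    have : ∀ x ∈ range (N+1), 2 * ((N.choose (K+1) : ℂ) * ((N - (K+1)).choose x : ℂ))
        = (2 * (N.choose (K+1) : ℂ)) * (((N - (K+1)).choose x : ℕ) : ℂ) := by
      intro x _; ring
    rw [Finset.sum_congr rfl this, ← Finset.mul_sum, ← Nat.cast_sum,
      sum_choose' (N - (K+1)) (N+1) (by omega)]
    push_cast
    rw [show N - (K+1) = N - K - 1 from by omega]
  have ev1 : ∑ x ∈ range (N+1), (N.choose K : ℂ) * ((N - K).choose x : ℂ) * g x
      = (N.choose K : ℂ) * 2 ^ (N - K) * ((K : ℂ) + 1) := by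
    have expand : ∀ x ∈ range (N+1), (N.choose K : ℂ) * ((N - K).choose x : ℂ) * g x
        = (N.choose K : ℂ) * (2 * ((x * (N - K).choose x : ℕ) : ℂ))
          + ((N.choose K : ℂ) * (2 * ((K:ℂ)+1) - ((N:ℂ)+2) + 1)) * (((N - K).choose x : ℕ) : ℂ) := by
      intro x _; push_cast [hg]; ring
    rw [Finset.sum_congr rfl expand, Finset.sum_add_distrib, ← Finset.mul_sum, ← Finset.mul_sum,
      ← Finset.mul_sum, ← Nat.cast_sum, ← Nat.cast_sum,
      sum_mul_choose' (N - K) (N + 1) (by omega) (by omega),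
      sum_choose' (N - K) (N + 1) (by omega)]
    have h1 : (((N - K) * 2 ^ (N - K - 1) : ℕ) : ℂ) = ((N : ℂ) - K) * 2 ^ (N - K - 1) := by
      push_cast [Nat.cast_sub (by omega : K ≤ N)]; ring
    obtain ⟨d, hd⟩ : ∃ d, N - K = d + 1 := ⟨N - K - 1, by omega⟩
    have hd1 : N - K - 1 = d := by omega
    have h2 : ((2 ^ (N - K) : ℕ) : ℂ) = 2 * 2 ^ (N - K - 1) := by
      rw [hd1, hd]; push_cast [pow_succ]; ring
    have h3 : (2 : ℂ) ^ (N - K) = 2 * 2 ^ (N - K - 1) := by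
      rw [hd1, hd, pow_succ]; ring
    rw [h1, h2, h3]
    push_cast [Nat.cast_sub (by omega : K ≤ N)]
    ring
  rw [ev1, ev2]
  obtain ⟨d, hd⟩ : ∃ d, N - K = d + 1 := ⟨N - K - 1, by omega⟩
  have h3 : (2 : ℂ) ^ (N + 1 - (K + 1)) = 2 * 2 ^ (N - K - 1) := by
    rw [show N - K - 1 = d from by omega, show N + 1 - (K+1) = d + 1 from by omega, pow_succ]
    ring
  have h4 : (2:ℂ) ^ (N - K) = 2 * 2 ^ (N - K - 1) := by
    rw [show N - K - 1 = d from by omega, hd, pow_succ]; ring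
  rw [h3, h4]
  push_cast
  ring

noncomputable def cm (n q j : ℕ) : ℂ :=
  ∑ a ∈ Finset.range (j + 1), ∑ b ∈ Finset.range (n - j),
    if a + b = n - 1 - q then
      ((j.choose a : ℕ) : ℂ) * (((n - 1 - j).choose b : ℕ) : ℂ) * Complex.I ^ a * (-Complex.I) ^ b
    else 0

lemma genexp (n j : ℕ) (hj : j < n) (A B : Polynomial ℂ) :
    (A + Polynomial.C Complex.I * B) ^ j * (A - Polynomial.C Complex.I * B) ^ (n - 1 - j)
      = ∑ q : Fin n, cm n (q : ℕ) j • (A ^ (q : ℕ) * B ^ (n - 1 - (q : ℕ))) := by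
  rw [show A + Polynomial.C Complex.I * B = Polynomial.C Complex.I * B + A from add_comm _ _,
    show A - Polynomial.C Complex.I * B = -(Polynomial.C Complex.I * B) + A from by ring,
    add_pow, add_pow, Finset.sum_mul_sum]
  simp only [cm, show n - j = n - 1 - j + 1 from by omega, Finset.sum_smul]
  conv_rhs => rw [Finset.sum_comm]
  refine Finset.sum_congr rfl fun a ha => ?_
  conv_rhs => rw [Finset.sum_comm]
  refine Finset.sum_congr rfl fun b hb => ?_
  simp only [Finset.mem_range] at ha hb
  rw [Finset.sum_eq_single (⟨n - 1 - (a + b), by omega⟩ : Fin n)]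
  · rw [if_pos (by simp; omega)]
    have e1 : n - 1 - ((⟨n - 1 - (a + b), by omega⟩ : Fin n) : ℕ) = a + b := by
      simp; omega
    have e2 : ((⟨n - 1 - (a + b), by omega⟩ : Fin n) : ℕ) = (j - a) + (n - 1 - j - b) := by
      simp; omega
    rw [e1, e2, pow_add]
    simp only [Polynomial.smul_eq_C_mul, map_mul, map_pow, map_neg, Polynomial.C_eq_natCast,
      pow_add]
    ring
  · intro q _ hq
    rw [if_neg, zero_smul]
    intro hcond
    exact hq (by apply Fin.ext; simp; omega)
  · intro h
    exact absurd (Finset.mem_univ _) h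

lemma uvec_poly (n : ℕ) (q : Fin n) :
    ∑ l : Fin n, uvec n q l • (Polynomial.X : Polynomial ℂ) ^ (l : ℕ)
      = Polynomial.C (Complex.I ^ (n - 1 - (q : ℕ)) / 2 ^ (n - 1)) *
        ((Polynomial.X + 1) ^ (q : ℕ) * (1 - Polynomial.X) ^ (n - 1 - (q : ℕ))) := by
  have hq := q.isLt
  rw [show (1 : Polynomial ℂ) - Polynomial.X = -Polynomial.X + 1 from by ring,
    add_pow, add_pow, Finset.sum_mul_sum, Finset.mul_sum]
  simp only [uvec, Finset.mul_sum, show n - (q : ℕ) = n - 1 - (q : ℕ) + 1 from by omega,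
    Finset.sum_smul]
  rw [Finset.sum_comm]
  refine Finset.sum_congr rfl fun r hr => ?_
  rw [Finset.sum_comm]
  refine Finset.sum_congr rfl fun s hs => ?_
  simp only [Finset.mem_range] at hr hs
  rw [Finset.sum_eq_single (⟨r + s, by omega⟩ : Fin n)]
  · rw [mul_ite, mul_zero, if_pos (by simp)]
    simp only [Polynomial.smul_eq_C_mul, map_mul, map_pow, map_neg, map_one,
      Polynomial.C_eq_natCast, map_div₀, map_ofNat]
    push_cast
    ring
  · intro l _ hl
    rw [mul_ite, mul_zero, if_neg, zero_smul]
    intro hcond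
    exact hl (by apply Fin.ext; simp; omega)
  · intro h
    exact absurd (Finset.mem_univ _) h

lemma inv_sum (n : ℕ) (l j : Fin n) :
    ∑ q : Fin n, uvec n q l * cm n (q : ℕ) (j : ℕ) = if l = j then 1 else 0 := by
  classical
  have key : ∑ q : Fin n, cm n (q : ℕ) (j : ℕ) •
      (∑ l' : Fin n, uvec n q l' • (Polynomial.X : Polynomial ℂ) ^ (l' : ℕ))
      = (Polynomial.X : Polynomial ℂ) ^ (j : ℕ) := by
    have h1 := genexp n (j : ℕ) j.isLt (Polynomial.X + 1)
      (Polynomial.C Complex.I * (1 - Polynomial.X))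
    have hA : (Polynomial.X + 1) + Polynomial.C Complex.I *
        (Polynomial.C Complex.I * (1 - Polynomial.X)) = Polynomial.C 2 * Polynomial.X := by
      have h2 : (Polynomial.C Complex.I) * Polynomial.C Complex.I = Polynomial.C (-1 : ℂ) := by
        rw [← map_mul, Complex.I_mul_I]
      calc (Polynomial.X + 1) + Polynomial.C Complex.I *
            (Polynomial.C Complex.I * (1 - Polynomial.X))
          = (Polynomial.X + 1) + (Polynomial.C Complex.I * Polynomial.C Complex.I) *
            (1 - Polynomial.X) := by ring
        _ = _ := by rw [h2, map_neg, map_one, map_ofNat]; ring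
    have hB : (Polynomial.X + 1) - Polynomial.C Complex.I *
        (Polynomial.C Complex.I * (1 - Polynomial.X)) = Polynomial.C 2 := by
      have h2 : (Polynomial.C Complex.I) * Polynomial.C Complex.I = Polynomial.C (-1 : ℂ) := by
        rw [← map_mul, Complex.I_mul_I]
      calc (Polynomial.X + 1) - Polynomial.C Complex.I *
            (Polynomial.C Complex.I * (1 - Polynomial.X))
          = (Polynomial.X + 1) - (Polynomial.C Complex.I * Polynomial.C Complex.I) *
            (1 - Polynomial.X) := by ring
        _ = _ := by rw [h2, map_neg, map_one, map_ofNat]; ring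
    rw [hA, hB] at h1
    -- h1 : (C 2 * X)^j * (C 2)^(n-1-j) = ∑ q, cm n q j • ((X+1)^q * (C I * (1-X))^(n-1-q))
    have step : ∀ q : Fin n, cm n (q : ℕ) (j : ℕ) •
        (∑ l' : Fin n, uvec n q l' • (Polynomial.X : Polynomial ℂ) ^ (l' : ℕ))
        = Polynomial.C (((2 : ℂ) ^ (n-1))⁻¹) * (cm n (q : ℕ) (j : ℕ) •
          ((Polynomial.X + 1) ^ (q : ℕ) *
            (Polynomial.C Complex.I * (1 - Polynomial.X)) ^ (n - 1 - (q : ℕ)))) := by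
      intro q
      rw [uvec_poly, ← Polynomial.smul_eq_C_mul,
        show (Polynomial.C Complex.I * (1 - Polynomial.X)) ^ (n - 1 - (q:ℕ))
            = (Complex.I ^ (n - 1 - (q:ℕ))) • ((1 - Polynomial.X) ^ (n - 1 - (q:ℕ))) from by
          rw [mul_pow, ← map_pow, Polynomial.smul_eq_C_mul]]
      rw [← Polynomial.smul_eq_C_mul, mul_smul_comm, smul_smul, smul_smul, smul_smul]
      congr 1
      rw [div_eq_mul_inv]
      ring
    rw [Finset.sum_congr rfl (fun q _ => step q), ← Finset.mul_sum, ← h1]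
    rw [mul_pow, ← map_pow, ← map_pow]
    rw [show Polynomial.C (((2:ℂ)^(n-1))⁻¹) * (Polynomial.C ((2:ℂ)^((j:ℕ))) *
          (Polynomial.X : Polynomial ℂ) ^ (j:ℕ) * Polynomial.C ((2:ℂ)^(n-1-(j:ℕ))))
        = Polynomial.C (((2:ℂ)^(n-1))⁻¹ * (2:ℂ)^((j:ℕ)) * (2:ℂ)^(n-1-(j:ℕ))) *
          (Polynomial.X : Polynomial ℂ) ^ (j:ℕ) from by rw [map_mul, map_mul]; ring]
    rw [show ((2:ℂ)^(n-1))⁻¹ * (2:ℂ)^((j:ℕ)) * (2:ℂ)^(n-1-(j:ℕ)) = 1 from by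
        rw [mul_assoc, ← pow_add,
          show (j:ℕ) + (n - 1 - (j:ℕ)) = n - 1 from by have := j.isLt; omega]
        exact inv_mul_cancel₀ (pow_ne_zero _ two_ne_zero),
      map_one, one_mul]
  have key2 := congrArg (fun p => Polynomial.coeff p (l : ℕ)) key
  simp only [Polynomial.finset_sum_coeff, Polynomial.coeff_smul, smul_eq_mul,
    Polynomial.coeff_X_pow] at key2
  have inner : ∀ q : Fin n,
      (∑ l' : Fin n, uvec n q l' * (if (l:ℕ) = (l':ℕ) then (1:ℂ) else 0)) = uvec n q l := by
    intro q
    rw [Finset.sum_eq_single l]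
    · simp
    · intro l' _ hl'
      rw [if_neg (fun h => hl' (Fin.ext h.symm)), mul_zero]
    · intro h; exact absurd (Finset.mem_univ _) h
  simp only [Finset.mul_sum] at key2
  rw [Finset.sum_congr rfl (fun q _ => by rw [← Finset.mul_sum, inner q])] at key2
  rw [Finset.sum_congr rfl (fun q _ => mul_comm (uvec n q l) (cm n (q:ℕ) (j:ℕ)))]
  rw [key2]
  simp [Fin.ext_iff, eq_comm]


lemma cm_p0 (n : ℕ) (hn : 2 ≤ n) (l : ℕ) (hl : l < n) :
    cm n (n - 2) l = Complex.I * (2 * (l : ℂ) - (n : ℂ) + 1) := by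
  have h1 : n - 1 - (n - 2) = 1 := by omega
  rw [cm, h1]
  by_cases hl0 : l = 0
  · subst hl0
    rw [Finset.sum_range_one]
    simp only [zero_add]
    rw [Finset.sum_ite_eq' (Finset.range (n - 0)) 1
      (fun b => ((Nat.choose 0 0 : ℕ) : ℂ) * (((n - 1 - 0).choose b : ℕ) : ℂ) *
        Complex.I ^ 0 * (-Complex.I) ^ b)]
    rw [if_pos (by simp; omega)]
    simp only [Nat.choose_zero_right, Nat.sub_zero, Nat.choose_one_right, pow_zero, pow_one,
      Nat.cast_one, one_mul, mul_one]
    rw [Nat.cast_sub (by omega : 1 ≤ n)]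
    push_cast
    ring
  · have hsub : Finset.range 2 ⊆ Finset.range (l + 1) := by
      intro x hx; simp only [Finset.mem_range] at *; omega
    rw [← Finset.sum_subset hsub (by
      intro a _ ha2
      simp only [Finset.mem_range] at ha2
      exact Finset.sum_eq_zero fun b _ => if_neg (by omega))]
    rw [Finset.sum_range_succ, Finset.sum_range_one]
    have hg1 : (∑ b ∈ Finset.range (n - l),
        if 1 + b = 1 then ((l.choose 1 : ℕ) : ℂ) * (((n - 1 - l).choose b : ℕ) : ℂ) *
          Complex.I ^ 1 * (-Complex.I) ^ b else 0)
        = (l : ℂ) * Complex.I := by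
      simp only [show ∀ b : ℕ, (1 + b = 1) ↔ (b = 0) from fun b => by omega]
      rw [Finset.sum_ite_eq' (Finset.range (n - l)) 0
        (fun b => ((l.choose 1 : ℕ) : ℂ) * (((n - 1 - l).choose b : ℕ) : ℂ) *
          Complex.I ^ 1 * (-Complex.I) ^ b)]
      rw [if_pos (by simp; omega)]
      simp [Nat.choose_one_right]
    have hg0 : (∑ b ∈ Finset.range (n - l),
        if 0 + b = 1 then ((l.choose 0 : ℕ) : ℂ) * (((n - 1 - l).choose b : ℕ) : ℂ) *
          Complex.I ^ 0 * (-Complex.I) ^ b else 0)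
        = ((n - 1 - l : ℕ) : ℂ) * (-Complex.I) := by
      simp only [zero_add]
      rw [Finset.sum_ite_eq' (Finset.range (n - l)) 1
        (fun b => ((l.choose 0 : ℕ) : ℂ) * (((n - 1 - l).choose b : ℕ) : ℂ) *
          Complex.I ^ 0 * (-Complex.I) ^ b)]
      by_cases hl2 : l ≤ n - 2
      · rw [if_pos (by simp; omega)]
        simp [Nat.choose_one_right]
      · rw [if_neg (by simp; omega), show n - 1 - l = 0 from by omega]
        simp
    rw [hg0, hg1, Nat.cast_sub (by omega : l ≤ n - 1), Nat.cast_sub (by omega : 1 ≤ n)]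
    push_cast
    ring

lemma u0_apply (n : ℕ) (hn : 2 ≤ n) (m : Fin n) :
    uvec n ⟨n - 2, by omega⟩ m
      = Complex.I / 2 ^ (n - 1) *
        ((((n - 2).choose (m : ℕ) : ℕ) : ℂ) -
          if (m : ℕ) = 0 then 0 else (((n - 2).choose ((m : ℕ) - 1) : ℕ) : ℂ)) := by
  rw [uvec]
  simp only [show ((⟨n - 2, by omega⟩ : Fin n) : ℕ) = n - 2 from rfl,
    show n - 1 - (n - 2) = 1 from by omega, show n - (n - 2) = 2 from by omega, pow_one]
  congr 1
  have inner : ∀ r : ℕ, (∑ s ∈ Finset.range 2,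
      if r + s = (m : ℕ) then
        ((-1 : ℂ)) ^ s * (((n - 2).choose r : ℕ) : ℂ) * ((Nat.choose 1 s : ℕ) : ℂ) else 0)
      = (if r = (m : ℕ) then (((n - 2).choose r : ℕ) : ℂ) else 0)
        + (if r + 1 = (m : ℕ) then -(((n - 2).choose r : ℕ) : ℂ) else 0) := by
    intro r
    rw [Finset.sum_range_succ, Finset.sum_range_one]
    congr 1
    · simp
    · split <;> simp
  have hfirst : (∑ r ∈ Finset.range (n - 2 + 1),
      if r = (m : ℕ) then (((n - 2).choose r : ℕ) : ℂ) else 0)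
      = (((n - 2).choose (m : ℕ) : ℕ) : ℂ) := by
    rw [Finset.sum_ite_eq' (Finset.range (n - 2 + 1)) (m : ℕ)
      (fun r => (((n - 2).choose r : ℕ) : ℂ))]
    by_cases hm : (m : ℕ) ≤ n - 2
    · rw [if_pos (by simp; omega)]
    · rw [if_neg (by simp; omega), Nat.choose_eq_zero_of_lt (by omega)]
      simp
  have hsecond : (∑ r ∈ Finset.range (n - 2 + 1),
      if r + 1 = (m : ℕ) then -(((n - 2).choose r : ℕ) : ℂ) else 0)
      = -(if (m : ℕ) = 0 then 0 else (((n - 2).choose ((m : ℕ) - 1) : ℕ) : ℂ)) := by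
    by_cases hm0 : (m : ℕ) = 0
    · rw [hm0]
      rw [Finset.sum_eq_zero fun r _ => if_neg (by omega)]
      simp
    · simp only [show ∀ r : ℕ, (r + 1 = (m : ℕ)) ↔ (r = (m : ℕ) - 1) from fun r => by omega]
      rw [Finset.sum_ite_eq' (Finset.range (n - 2 + 1)) ((m : ℕ) - 1)
        (fun r => -(((n - 2).choose r : ℕ) : ℂ))]
      rw [if_pos (by simp; have := m.isLt; omega), if_neg hm0]
  rw [Finset.sum_congr rfl fun r _ => inner r, Finset.sum_add_distrib, hfirst, hsecond]
  ring

lemma Emat_pow_apply (n : ℕ) (k : ℕ) (i j : Fin n) :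
    ((Emat n) ^ k) i j
      = if (i : ℕ) = (j : ℕ) + k then (((n - 1 - (j : ℕ)).descFactorial k : ℕ) : ℂ) else 0 := by
  induction k generalizing i j with
  | zero =>
    rw [pow_zero, Matrix.one_apply]
    simp [Fin.ext_iff]
  | succ k ih =>
    rw [pow_succ, Matrix.mul_apply]
    simp only [ih, Emat]
    by_cases hj : (j : ℕ) + 1 < n
    · rw [Finset.sum_eq_single (⟨(j : ℕ) + 1, hj⟩ : Fin n)]
      · simp only [show ((⟨(j : ℕ) + 1, hj⟩ : Fin n) : ℕ) = (j : ℕ) + 1 from rfl]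
        simp only [if_true]
        rw [ite_mul, zero_mul]
        simp only [show ∀ x : ℕ, (x = (j : ℕ) + 1 + k) ↔ (x = (j : ℕ) + (k + 1)) from
          fun x => by omega]
        congr 1
        rw [show n - 1 - (j : ℕ) = (n - 1 - ((j : ℕ) + 1)) + 1 from by omega,
          Nat.succ_descFactorial_succ, show n - 1 - ((j:ℕ) + 1) + 1 = n - 1 - (j:ℕ) from by omega]
        push_cast
        ring
      · intro m _ hm
        have hh : ¬((m : ℕ) = (j : ℕ) + 1) := fun h => hm (Fin.ext (by simpa using h))
        rw [if_neg hh, mul_zero]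
      · intro h; exact absurd (Finset.mem_univ _) h
    · rw [Finset.sum_eq_zero fun m _ => by
        have hh : ¬((m : ℕ) = (j : ℕ) + 1) := by have := m.isLt; omega
        rw [if_neg hh, mul_zero]]
      rw [if_neg (show ¬((i : ℕ) = (j : ℕ) + (k + 1)) from by have := i.isLt; omega)]

end AuxLemmas

/-- For `p = n-1` (1-based) and `1 ≤ k ≤ n-2`:
`Tr(E⁰_k·π_{n-1}) = ((n-2)!)/(2^k(n-k-1)!)·(n - k² - k - 1)`, and in particular this
trace vanishes if and only if `n = k² + k + 1`. -/
theorem stmt_13 (n k : ℕ) (hn : 2 ≤ n) (hk1 : 1 ≤ k) (hk : k ≤ n - 2)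
    (P : Matrix (Fin n) (Fin n) ℂ)
    (hP1 : P.mulVec (uvec n ⟨n - 2, by omega⟩) = uvec n ⟨n - 2, by omega⟩)
    (hP0 : ∀ q : Fin n, q ≠ ⟨n - 2, by omega⟩ → P.mulVec (uvec n q) = 0) :
    Matrix.trace (E0 n k * P)
      = ((n - 2).factorial : ℂ) / (2 ^ k * ((n - k - 1).factorial : ℂ)) *
          ((n : ℂ) - (k : ℂ) ^ 2 - (k : ℂ) - 1) ∧
      (Matrix.trace (E0 n k * P) = 0 ↔ n = k ^ 2 + k + 1) := by
  classical
  have hn1 : 1 ≤ n := by omega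
  set p0 : Fin n := ⟨n - 2, by omega⟩ with hp0def
  -- Step 1 : P is the explicit rank-one matrix
  have hPfact : ∀ l i : Fin n, P l i = uvec n p0 l * cm n (n - 2) (i : ℕ) := by
    have hUC : (Matrix.of fun (l q : Fin n) => uvec n q l) *
        (Matrix.of fun (q j : Fin n) => cm n (q : ℕ) (j : ℕ)) = 1 := by
      ext l j
      rw [Matrix.mul_apply, Matrix.one_apply]
      simpa using inv_sum n l j
    have hPU : P * (Matrix.of fun (l q : Fin n) => uvec n q l)
        = Matrix.of fun (l q : Fin n) => if q = p0 then uvec n p0 l else 0 := by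
      ext l q
      rw [Matrix.mul_apply, Matrix.of_apply]
      by_cases hq : q = p0
      · subst hq
        rw [if_pos rfl]
        have h := congrFun hP1 l
        simpa [Matrix.mulVec, dotProduct] using h
      · rw [if_neg hq]
        have h := congrFun (hP0 q hq) l
        simpa [Matrix.mulVec, dotProduct] using h
    intro l i
    have hfac : P = (P * (Matrix.of fun (l q : Fin n) => uvec n q l)) *
        (Matrix.of fun (q j : Fin n) => cm n (q : ℕ) (j : ℕ)) := by
      rw [Matrix.mul_assoc, hUC, Matrix.mul_one]
    rw [hfac, hPU, Matrix.mul_apply]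
    simp only [Matrix.of_apply]
    rw [Finset.sum_eq_single p0]
    · rw [if_pos rfl]
    · intro q _ hq; rw [if_neg hq, zero_mul]
    · intro h; exact absurd (Finset.mem_univ _) h
  -- Step 2 : trace as a sum over one index
  have htrace : Matrix.trace (E0 n k * P)
      = ∑ m : Fin n, (((n - 1 - (m : ℕ)).descFactorial k : ℕ) : ℂ) *
          (uvec n p0 m * cm n (n - 2) ((m : ℕ) + k)) := by
    rw [Matrix.trace]
    simp only [Matrix.diag_apply, Matrix.mul_apply]
    rw [Finset.sum_comm]
    refine Finset.sum_congr rfl fun m _ => ?_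
    simp only [E0, Emat_pow_apply, hPfact]
    by_cases h : (m : ℕ) + k < n
    · rw [Finset.sum_eq_single (⟨(m : ℕ) + k, h⟩ : Fin n)]
      · rw [if_pos rfl]
      · intro i _ hi
        have hh : ¬((i : ℕ) = (m : ℕ) + k) := fun hc => hi (Fin.ext (by simpa using hc))
        rw [if_neg hh, zero_mul]
      · intro h'; exact absurd (Finset.mem_univ _) h'
    · rw [Finset.sum_eq_zero fun i _ => by
        have hh : ¬((i : ℕ) = (m : ℕ) + k) := by have := i.isLt; omega
        rw [if_neg hh, zero_mul]]
      rw [show ((n - 1 - (m : ℕ)).descFactorial k) = 0 from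
        Nat.descFactorial_eq_zero_iff_lt.2 (by omega)]
      simp
  -- Step 3 : closed form of each term, as a range sum
  have hsum : Matrix.trace (E0 n k * P)
      = ∑ m ∈ Finset.range n, (-(1 / (2:ℂ) ^ (n-1))) *
          ((((n - 1 - m).descFactorial k : ℕ) : ℂ) *
            ((((n - 2).choose m : ℕ) : ℂ) -
              if m = 0 then 0 else (((n - 2).choose (m - 1) : ℕ) : ℂ)) *
            (2 * (m : ℂ) + (2 * (k : ℂ) - (n : ℂ) + 1))) := by
    rw [htrace, ← Fin.sum_univ_eq_sum_range]
    refine Finset.sum_congr rfl fun m _ => ?_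
    by_cases h : (m : ℕ) + k < n
    · rw [show uvec n p0 m = uvec n ⟨n - 2, by omega⟩ m from rfl, u0_apply n hn m,
        cm_p0 n hn ((m : ℕ) + k) h]
      have hII := Complex.I_mul_I
      push_cast
      linear_combination ((((n - 1 - (m:ℕ)).descFactorial k : ℕ) : ℂ) *
        ((((n - 2).choose (m:ℕ) : ℕ) : ℂ) -
          if (m:ℕ) = 0 then 0 else (((n - 2).choose ((m:ℕ) - 1) : ℕ) : ℂ)) *
        (2 * ((m:ℕ) : ℂ) + (2 * (k : ℂ) - (n : ℂ) + 1)) / 2 ^ (n-1)) * hII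
    · rw [show ((n - 1 - (m : ℕ)).descFactorial k) = 0 from
        Nat.descFactorial_eq_zero_iff_lt.2 (by omega)]
      simp
  rw [← Finset.mul_sum, core_sum n k hn hk1 hk] at hsum
  -- Step 4 : final arithmetic
  have hden : ((2 : ℂ) ^ k * ((n - k - 1).factorial : ℂ)) ≠ 0 :=
    mul_ne_zero (pow_ne_zero _ two_ne_zero)
      (Nat.cast_ne_zero.2 (Nat.factorial_ne_zero _))
  have hpow : (2 : ℂ) ^ (n - 1 - k) * (2 : ℂ) ^ k = 2 ^ (n - 1) := by
    rw [← pow_add]; congr 1; omega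
  have e1 : (k.factorial : ℂ) * (((n - 2).choose k : ℕ) : ℂ) * (((n - k - 1).factorial : ℕ) : ℂ)
      = (((n - 2).factorial : ℕ) : ℂ) * ((n : ℂ) - 1 - (k : ℂ)) := by
    have hnat : k.factorial * ((n - 2).choose k) * (n - k - 1).factorial
        = (n - 2).factorial * (n - 1 - k) := by
      rw [show n - k - 1 = (n - 2 - k) + 1 from by omega, Nat.factorial_succ,
        show (n - 2 - k) + 1 = n - 1 - k from by omega,
        ← Nat.choose_mul_factorial_mul_factorial (show k ≤ n - 2 from hk)]
      ring
    calc (k.factorial : ℂ) * (((n - 2).choose k : ℕ) : ℂ) * (((n - k - 1).factorial : ℕ) : ℂ)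
        = ((k.factorial * ((n - 2).choose k) * (n - k - 1).factorial : ℕ) : ℂ) := by
          push_cast; ring
      _ = (((n - 2).factorial * (n - 1 - k) : ℕ) : ℂ) := by rw [hnat]
      _ = (((n - 2).factorial : ℕ) : ℂ) * ((n : ℂ) - 1 - (k : ℂ)) := by
          rw [Nat.cast_mul, Nat.cast_sub (by omega : k ≤ n - 1),
            Nat.cast_sub (by omega : 1 ≤ n), Nat.cast_one]
  have e2 : (k : ℂ) * (k.factorial : ℂ) * (((n - 2).choose (k - 1) : ℕ) : ℂ) *
      (((n - k - 1).factorial : ℕ) : ℂ) = (k : ℂ) ^ 2 * (((n - 2).factorial : ℕ) : ℂ) := by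
    obtain ⟨K, rfl⟩ : ∃ K, k = K + 1 := ⟨k - 1, by omega⟩
    have hnat : (K + 1) * (K + 1).factorial * ((n - 2).choose K) * (n - (K + 1) - 1).factorial
        = (K + 1) ^ 2 * (n - 2).factorial := by
      rw [Nat.factorial_succ, show n - (K + 1) - 1 = n - 2 - K from by omega,
        ← Nat.choose_mul_factorial_mul_factorial (show K ≤ n - 2 from by omega)]
      ring
    calc (↑(K+1) : ℂ) * ((K+1).factorial : ℂ) * (((n - 2).choose ((K+1) - 1) : ℕ) : ℂ) *
        (((n - (K+1) - 1).factorial : ℕ) : ℂ)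
        = (((K + 1) * (K + 1).factorial * ((n - 2).choose K) *
            (n - (K + 1) - 1).factorial : ℕ) : ℂ) := by
          rw [show (K + 1) - 1 = K from rfl]; push_cast; ring
      _ = (((K + 1) ^ 2 * (n - 2).factorial : ℕ) : ℂ) := by rw [hnat]
      _ = _ := by push_cast; ring
  have hTval : Matrix.trace (E0 n k * P)
      = ((n - 2).factorial : ℂ) / (2 ^ k * ((n - k - 1).factorial : ℂ)) *
          ((n : ℂ) - (k : ℂ) ^ 2 - (k : ℂ) - 1) := by
    rw [hsum, div_mul_eq_mul_div, eq_div_iff hden]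
    have h2n : (2 : ℂ) ^ (n - 1) ≠ 0 := pow_ne_zero _ two_ne_zero
    field_simp
    linear_combination ((k.factorial : ℂ) * (((n - 2).choose k : ℕ) : ℂ) *
        (((n - k - 1).factorial : ℕ) : ℂ) -
        (k : ℂ) * (k.factorial : ℂ) * (((n - 2).choose (k - 1) : ℕ) : ℂ) *
        (((n - k - 1).factorial : ℕ) : ℂ)) * hpow +
      (2 : ℂ) ^ (n - 1) * e1 - (2 : ℂ) ^ (n - 1) * e2
  refine ⟨hTval, ?_⟩
  rw [hTval]
  have hcoef : ((n - 2).factorial : ℂ) / (2 ^ k * ((n - k - 1).factorial : ℂ)) ≠ 0 :=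
    div_ne_zero (Nat.cast_ne_zero.2 (Nat.factorial_ne_zero _)) hden
  constructor
  · intro h0
    rcases mul_eq_zero.1 h0 with h | h
    · exact absurd h hcoef
    · have : (n : ℂ) = ((k ^ 2 + k + 1 : ℕ) : ℂ) := by push_cast; linear_combination h
      exact_mod_cast this
  · intro h
    rw [h]
    push_cast
    ring
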